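/- Let b(x) = √|x| on ℝ. Define X : [0,∞) × ℝ → ℝ by: for x < 0, X(t,x) = −(√(−x) − t/2)² if t ≤ 2√(−x) and X(t,x) = (t/2 − √(−x))² if t > 2√(−x); and for x ≥ 0, X(t,x) = (t/2 + √x)². Define Y : [0,∞) × ℝ → ℝ in the same way except that Y(t,x) = 0 for all t ≥ 2√(−x) when x < 0. Then: (i) for every x, both t ↦ X(t,x) and t ↦ Y(t,x) are continuously differentiable on [0,∞) and solve ∂_t Z(t,x) = √|Z(t,x)| with Z(0,x) = x; (ii) there exists a continuous function φ : [0,∞) → [0,∞) with φ(ξ) > 0 for ξ > 0 such that |X(t,I)| ≥ φ(|I|) for every bounded interval I ⊂ ℝ and every t ∈ [0,1] (weak compressibility); (iii) Y fails weak compressibility on [0,1]: |Y(2√ε, [−ε, 0])| = 0 for every 0 < ε ≤ 1/4, so no function φ with φ(ξ) > 0 for ξ > 0 can satisfy |Y(t,I)| ≥ φ(|I|) for all bounded intervals I and all t ∈ [0,1]. -/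

import Mathlib

open MeasureTheory Set
open scoped Classical

/-- The flow selection of `ẋ = √|x|` that leaves the origin immediately. -/
noncomputable def Xex (t x : ℝ) : ℝ :=
  if x < 0 then
    (if t ≤ 2 * Real.sqrt (-x) then -(Real.sqrt (-x) - t / 2) ^ 2
      else (t / 2 - Real.sqrt (-x)) ^ 2)
  else (t / 2 + Real.sqrt x) ^ 2

/-- The solution of `ẋ = √|x|` that sticks at the origin forever. -/
noncomputable def Yex (t x : ℝ) : ℝ :=
  if x < 0 then
    (if t ≤ 2 * Real.sqrt (-x) then -(Real.sqrt (-x) - t / 2) ^ 2 else 0)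
  else (t / 2 + Real.sqrt x) ^ 2

/-! ### Auxiliary definitions and lemmas -/

/-- The signed square `y ↦ y|y|`. -/
noncomputable def gsq (y : ℝ) : ℝ := y * |y|

/-- The signed square root. -/
noncomputable def usq (x : ℝ) : ℝ := Real.sqrt (max x 0) - Real.sqrt (max (-x) 0)

lemma gsq_mono : Monotone gsq := by
  intro a b hab
  unfold gsq
  rcases abs_cases a with ⟨h1, h2⟩ | ⟨h1, h2⟩ <;>
    rcases abs_cases b with ⟨h3, h4⟩ | ⟨h3, h4⟩ <;> nlinarith

lemma usq_mono : Monotone usq := by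
  intro a b hab
  unfold usq
  have h1 : Real.sqrt (max a 0) ≤ Real.sqrt (max b 0) :=
    Real.sqrt_le_sqrt (max_le_max hab le_rfl)
  have h2 : Real.sqrt (max (-b) 0) ≤ Real.sqrt (max (-a) 0) :=
    Real.sqrt_le_sqrt (max_le_max (by linarith) le_rfl)
  linarith

lemma usq_of_nonneg {x : ℝ} (hx : 0 ≤ x) : usq x = Real.sqrt x := by
  unfold usq
  rw [max_eq_left hx, max_eq_right (by linarith), Real.sqrt_zero, sub_zero]

lemma usq_of_neg {x : ℝ} (hx : x < 0) : usq x = -Real.sqrt (-x) := by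
  unfold usq
  rw [max_eq_right hx.le, max_eq_left (by linarith), Real.sqrt_zero, zero_sub]

lemma gsq_usq (x : ℝ) : gsq (usq x) = x := by
  rcases le_or_gt 0 x with hx | hx
  · rw [usq_of_nonneg hx]
    unfold gsq
    rw [abs_of_nonneg (Real.sqrt_nonneg x), Real.mul_self_sqrt hx]
  · rw [usq_of_neg hx]
    unfold gsq
    rw [abs_neg, abs_of_nonneg (Real.sqrt_nonneg _), neg_mul,
      Real.mul_self_sqrt (by linarith), neg_neg]

lemma sqrt_abs_gsq (y : ℝ) : Real.sqrt |gsq y| = |y| := by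
  unfold gsq
  rw [abs_mul, abs_abs, Real.sqrt_mul_self (abs_nonneg y)]

lemma gsq_sq_half {a b : ℝ} (hab : a ≤ b) : (b - a) ^ 2 / 2 ≤ gsq b - gsq a := by
  unfold gsq
  rcases abs_cases a with ⟨h1, h2⟩ | ⟨h1, h2⟩ <;>
    rcases abs_cases b with ⟨h3, h4⟩ | ⟨h3, h4⟩ <;>
      nlinarith [sq_nonneg (a + b), sq_nonneg (a - b)]

lemma gsq_lip {a b s : ℝ} (hab : a ≤ b) (hs : 0 ≤ s) :
    gsq b - gsq a - 2 * s * (b - a) ≤ gsq (b + s) - gsq (a + s) := by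
  unfold gsq
  rcases abs_cases a with ⟨h1, h2⟩ | ⟨h1, h2⟩ <;>
    rcases abs_cases b with ⟨h3, h4⟩ | ⟨h3, h4⟩ <;>
    rcases abs_cases (a + s) with ⟨h5, h6⟩ | ⟨h5, h6⟩ <;>
    rcases abs_cases (b + s) with ⟨h7, h8⟩ | ⟨h7, h8⟩ <;> nlinarith

lemma gsq_key {α β s : ℝ} (hab : α ≤ β) (hs0 : 0 ≤ s) (hs : s ≤ 1 / 2) :
    min ((gsq β - gsq α) / 2) ((gsq β - gsq α) ^ 2 / 8) ≤ gsq (β + s) - gsq (α + s) := by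
  have hξ0 : 0 ≤ gsq β - gsq α := sub_nonneg.2 (gsq_mono hab)
  have h1 := gsq_sq_half (show α + s ≤ β + s by linarith)
  have h2 := gsq_lip hab hs0
  rcases le_or_gt (β - α) ((gsq β - gsq α) / 2) with h | h
  · exact le_trans (min_le_left _ _) (by nlinarith)
  · exact le_trans (min_le_right _ _) (by nlinarith)

lemma deriv_zero_of_sq_bound {f : ℝ → ℝ} (h : ∀ y, |f y| ≤ y ^ 2) :
    HasDerivAt f 0 0 := by
  have h0 : f 0 = 0 := by
    have h1 := h 0
    have h2 := abs_nonneg (f 0)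
    have : |f 0| = 0 := by nlinarith
    exact abs_eq_zero.mp this
  rw [hasDerivAt_iff_isLittleO]
  simp only [h0, sub_zero, smul_zero, zero_mul, mul_zero]
  rw [Asymptotics.isLittleO_iff]
  intro c hc
  have hev : ∀ᶠ y : ℝ in nhds 0, |y| < c := by
    have h1 : Continuous fun y : ℝ => |y| := continuous_abs
    have h2 := h1.tendsto 0
    simp only [abs_zero] at h2
    exact h2.eventually (eventually_lt_nhds hc)
  filter_upwards [hev] with y hy
  simp only [Real.norm_eq_abs]
  calc |f y| ≤ y ^ 2 := h y
    _ = |y| * |y| := by rw [← sq_abs]; ring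
    _ ≤ c * |y| := mul_le_mul_of_nonneg_right hy.le (abs_nonneg y)

lemma hasDerivAt_gsq (y : ℝ) : HasDerivAt gsq (2 * |y|) y := by
  rcases lt_trichotomy y 0 with hy | hy | hy
  · have hd : HasDerivAt (fun z : ℝ => -(z * z)) (2 * |y|) y := by
      have := ((hasDerivAt_id' y).fun_mul (hasDerivAt_id' y)).fun_neg
      try simp only [id_eq] at this
      refine this.congr_deriv ?_
      rw [abs_of_neg hy]; ring
    apply hd.congr_of_eventuallyEq
    filter_upwards [IsOpen.eventually_mem isOpen_Iio hy] with z hz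
    unfold gsq
    rw [abs_of_neg (Set.mem_Iio.mp hz)]; ring
  · subst hy
    simp only [abs_zero, mul_zero]
    apply deriv_zero_of_sq_bound
    intro z
    unfold gsq
    rw [abs_mul, abs_abs, ← sq_abs]
    nlinarith [abs_nonneg z]
  · have hd : HasDerivAt (fun z : ℝ => z * z) (2 * |y|) y := by
      have := (hasDerivAt_id' y).fun_mul (hasDerivAt_id' y)
      try simp only [id_eq] at this
      refine this.congr_deriv ?_
      rw [abs_of_pos hy]; ring
    apply hd.congr_of_eventuallyEq
    filter_upwards [IsOpen.eventually_mem isOpen_Ioi hy] with z hz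
    unfold gsq
    rw [abs_of_pos (Set.mem_Ioi.mp hz)]

lemma hasDerivAt_gsq_min (y : ℝ) :
    HasDerivAt (fun z : ℝ => gsq (min z 0)) (2 * |min y 0|) y := by
  rcases lt_trichotomy y 0 with hy | hy | hy
  · have hd := hasDerivAt_gsq y
    rw [show |min y 0| = |y| by rw [min_eq_left hy.le]]
    apply hd.congr_of_eventuallyEq
    filter_upwards [IsOpen.eventually_mem isOpen_Iio hy] with z hz
    rw [min_eq_left (Set.mem_Iio.mp hz).le]
  · subst hy
    simp only [min_self, abs_zero, mul_zero]
    apply deriv_zero_of_sq_bound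
    intro z
    unfold gsq
    rw [abs_mul, abs_abs, ← sq_abs]
    have h1 : |min z 0| ≤ |z| := by
      rcases le_or_gt z 0 with h | h
      · rw [min_eq_left h]
      · rw [min_eq_right h.le]; simp [abs_nonneg]
    nlinarith [abs_nonneg z, abs_nonneg (min z 0)]
  · have hd : HasDerivAt (fun _ : ℝ => gsq 0) (0 : ℝ) y := hasDerivAt_const y _
    rw [show min y 0 = 0 from min_eq_right hy.le]
    simp only [abs_zero, mul_zero]
    apply hd.congr_of_eventuallyEq
    filter_upwards [IsOpen.eventually_mem isOpen_Ioi hy] with z hz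
    rw [min_eq_right (Set.mem_Ioi.mp hz).le]

lemma hasDerivAt_gsq_aff (w t : ℝ) :
    HasDerivAt (fun s : ℝ => gsq (s / 2 + w)) |t / 2 + w| t := by
  have h1 : HasDerivAt (fun s : ℝ => s / 2 + w) (1 / 2) t := by
    simpa using ((hasDerivAt_id t).div_const 2).add_const w
  have := (hasDerivAt_gsq (t / 2 + w)).comp t h1
  refine this.congr_deriv ?_
  ring

lemma hasDerivAt_gsq_min_aff (w t : ℝ) :
    HasDerivAt (fun s : ℝ => gsq (min (s / 2 + w) 0)) |min (t / 2 + w) 0| t := by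
  have h1 : HasDerivAt (fun s : ℝ => s / 2 + w) (1 / 2) t := by
    simpa using ((hasDerivAt_id t).div_const 2).add_const w
  have := (hasDerivAt_gsq_min (t / 2 + w)).comp t h1
  refine this.congr_deriv ?_
  ring

lemma Xex_eq {t : ℝ} (x : ℝ) (ht : 0 ≤ t) : Xex t x = gsq (t / 2 + usq x) := by
  unfold Xex gsq
  by_cases hx : x < 0
  · rw [if_pos hx, usq_of_neg hx]
    by_cases h2 : t ≤ 2 * Real.sqrt (-x)
    · rw [if_pos h2, abs_of_nonpos (by linarith)]
      ring
    · rw [if_neg h2, abs_of_pos (by push_neg at h2; linarith)]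
      ring
  · rw [if_neg hx, usq_of_nonneg (by linarith)]
    have h3 : 0 ≤ t / 2 + Real.sqrt x := by positivity
    rw [abs_of_nonneg h3]
    ring

lemma Yex_eq_neg {x : ℝ} (hx : x < 0) (t : ℝ) :
    Yex t x = gsq (min (t / 2 + usq x) 0) := by
  unfold Yex gsq
  rw [if_pos hx, usq_of_neg hx]
  by_cases h2 : t ≤ 2 * Real.sqrt (-x)
  · rw [if_pos h2, min_eq_left (by linarith), abs_of_nonpos (by linarith)]
    ring
  · rw [if_neg h2, min_eq_right (by push_neg at h2; linarith)]
    simp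

lemma Yex_eq_pos {x : ℝ} (hx : ¬ x < 0) (t : ℝ) : Yex t x = Xex t x := by
  unfold Yex Xex
  rw [if_neg hx, if_neg hx]

/-- (i) both `X` and `Y` are `C¹` in time on `[0,∞)` and solve
`∂ₜZ = √|Z|`, `Z(0,x) = x`; (ii) `X` satisfies the weak compressibility condition on
`[0,1]` with some continuous modulus `φ` positive on `(0,∞)`; (iii) `Y` fails it:
`|Y(2√ε, [-ε,0])| = 0` for `0 < ε ≤ 1/4`, so no such modulus exists for `Y`. -/
theorem stmt18 :
    (∀ x : ℝ, Xex 0 x = x ∧ Yex 0 x = x ∧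
      ∀ t ∈ Set.Ici (0 : ℝ),
        HasDerivWithinAt (fun s => Xex s x) (Real.sqrt |Xex t x|) (Set.Ici 0) t ∧
        HasDerivWithinAt (fun s => Yex s x) (Real.sqrt |Yex t x|) (Set.Ici 0) t) ∧
    (∃ φ : ℝ → ℝ, ContinuousOn φ (Set.Ici 0) ∧ (∀ ξ > (0 : ℝ), 0 < φ ξ) ∧
      ∀ a c : ℝ, a ≤ c → ∀ t ∈ Set.Icc (0 : ℝ) 1,
        φ (c - a) ≤ (volume (Xex t '' Set.Icc a c)).toReal) ∧
    (∀ ε : ℝ, 0 < ε → ε ≤ 1 / 4 →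
      volume (Yex (2 * Real.sqrt ε) '' Set.Icc (-ε) 0) = 0) ∧
    ¬ ∃ φ : ℝ → ℝ, ContinuousOn φ (Set.Ici 0) ∧ (∀ ξ > (0 : ℝ), 0 < φ ξ) ∧
      ∀ a c : ℝ, a ≤ c → ∀ t ∈ Set.Icc (0 : ℝ) 1,
        φ (c - a) ≤ (volume (Yex t '' Set.Icc a c)).toReal := by
  have part3 : ∀ ε : ℝ, 0 < ε → ε ≤ 1 / 4 →
      volume (Yex (2 * Real.sqrt ε) '' Set.Icc (-ε) 0) = 0 := by
    intro ε hε _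
    have hsub : Yex (2 * Real.sqrt ε) '' Set.Icc (-ε) 0 ⊆ ({0, ε} : Set ℝ) := by
      rintro _ ⟨x, ⟨hx1, hx2⟩, rfl⟩
      by_cases hxneg : x < 0
      · unfold Yex
        rw [if_pos hxneg]
        by_cases h2 : 2 * Real.sqrt ε ≤ 2 * Real.sqrt (-x)
        · have h3 : Real.sqrt ε ≤ Real.sqrt (-x) := by linarith
          have h4 : ε ≤ -x := by
            have h5 := mul_self_le_mul_self (Real.sqrt_nonneg ε) h3
            rwa [Real.mul_self_sqrt hε.le, Real.mul_self_sqrt (by linarith)] at h5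
          have hxe : -x = ε := by linarith
          rw [if_pos h2, hxe]
          exact Or.inl (by ring)
        · rw [if_neg h2]
          exact Or.inl rfl
      · have hx0 : x = 0 := le_antisymm hx2 (not_lt.mp hxneg)
        subst hx0
        unfold Yex
        rw [if_neg hxneg]
        right
        rw [Real.sqrt_zero, add_zero]
        rw [show 2 * Real.sqrt ε / 2 = Real.sqrt ε by ring, Real.sq_sqrt hε.le]
        rfl
    have hfin : ({0, ε} : Set ℝ).Finite := (Set.finite_singleton ε).insert 0
    exact measure_mono_null hsub (hfin.measure_zero volume)
  refine ⟨?_, ?_, part3, ?_⟩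
  · -- part (i)
    intro x
    have hX0 : Xex 0 x = x := by
      rw [Xex_eq x le_rfl, show (0 : ℝ) / 2 + usq x = usq x by ring, gsq_usq]
    refine ⟨hX0, ?_, ?_⟩
    · by_cases hx : x < 0
      · rw [Yex_eq_neg hx 0, show (0 : ℝ) / 2 + usq x = usq x by ring,
          min_eq_left (by rw [usq_of_neg hx]; exact neg_nonpos.mpr (Real.sqrt_nonneg _)), gsq_usq]
      · rw [Yex_eq_pos hx 0, hX0]
    · intro t ht
      have ht0 : (0 : ℝ) ≤ t := ht
      constructor
      · have h1 : Real.sqrt |Xex t x| = |t / 2 + usq x| := by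
          rw [Xex_eq x ht0, sqrt_abs_gsq]
        rw [h1]
        exact ((hasDerivAt_gsq_aff (usq x) t).hasDerivWithinAt).congr
          (fun s hs => Xex_eq x hs) (Xex_eq x ht0)
      · by_cases hx : x < 0
        · have h1 : Real.sqrt |Yex t x| = |min (t / 2 + usq x) 0| := by
            rw [Yex_eq_neg hx t, sqrt_abs_gsq]
          rw [h1]
          exact ((hasDerivAt_gsq_min_aff (usq x) t).hasDerivWithinAt).congr
            (fun s _ => Yex_eq_neg hx s) (Yex_eq_neg hx t)
        · have h1 : Real.sqrt |Yex t x| = |t / 2 + usq x| := by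
            rw [Yex_eq_pos hx t, Xex_eq x ht0, sqrt_abs_gsq]
          rw [h1]
          exact ((hasDerivAt_gsq_aff (usq x) t).hasDerivWithinAt).congr
            (fun s hs => (Yex_eq_pos hx s).trans (Xex_eq x hs))
            ((Yex_eq_pos hx t).trans (Xex_eq x ht0))
  · -- part (ii)
    refine ⟨fun ξ => min (ξ / 2) (ξ ^ 2 / 8), ?_, ?_, ?_⟩
    · exact ((continuous_id.div_const 2).min ((continuous_pow 2).div_const 8)).continuousOn
    · intro ξ hξ
      exact lt_min (by linarith) (div_pos (pow_pos hξ 2) (by norm_num))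
    · intro a c hac t ht
      obtain ⟨ht0, ht1⟩ := ht
      have hs0 : (0 : ℝ) ≤ t / 2 := by linarith
      have hs1 : t / 2 ≤ 1 / 2 := by linarith
      have hmono : ∀ x y : ℝ, x ≤ y → Xex t x ≤ Xex t y := by
        intro x y hxy
        rw [Xex_eq x ht0, Xex_eq y ht0]
        exact gsq_mono (by linarith [usq_mono hxy])
      have hcont : Continuous fun x => Xex t x := by
        have heq : (fun x => Xex t x) = fun x => gsq (t / 2 + usq x) :=
          funext fun x => Xex_eq x ht0
        rw [heq]
        have hg : Continuous gsq := continuous_id.mul continuous_abs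
        have hu : Continuous usq :=
          (Real.continuous_sqrt.comp (continuous_id.max continuous_const)).sub
            (Real.continuous_sqrt.comp (continuous_neg.max continuous_const))
        exact hg.comp (continuous_const.add hu)
      have himg : Xex t '' Set.Icc a c = Set.Icc (Xex t a) (Xex t c) := by
        apply Set.Subset.antisymm
        · rintro _ ⟨x, hx, rfl⟩
          exact ⟨hmono a x hx.1, hmono x c hx.2⟩
        · exact intermediate_value_Icc hac hcont.continuousOn
      rw [himg, Real.volume_Icc, ENNReal.toReal_ofReal (by linarith [hmono a c hac])]
      have hkey := gsq_key (usq_mono hac) hs0 hs1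
      rw [gsq_usq, gsq_usq] at hkey
      calc min ((c - a) / 2) ((c - a) ^ 2 / 8)
          ≤ gsq (usq c + t / 2) - gsq (usq a + t / 2) := hkey
        _ = Xex t c - Xex t a := by
            rw [Xex_eq c ht0, Xex_eq a ht0, add_comm (t / 2) (usq c),
              add_comm (t / 2) (usq a)]
  · -- part (iv)
    rintro ⟨φ, hφc, hφpos, hb⟩
    have h14 : (2 : ℝ) * Real.sqrt (1 / 4) = 1 := by
      rw [show (1 : ℝ) / 4 = (1 / 2) ^ 2 by norm_num,
        Real.sqrt_sq (by norm_num : (0 : ℝ) ≤ 1 / 2)]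
      norm_num
    have h0 := part3 (1 / 4) (by norm_num) le_rfl
    rw [h14] at h0
    have hc := hb (-(1 / 4)) 0 (by norm_num) 1 ⟨by norm_num, le_rfl⟩
    rw [h0] at hc
    norm_num at hc
    linarith [hφpos (1 / 4) (by norm_num)]
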